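/- If V is a locally distributive quantaloid, then V-categories A and B are bisimilar if and only if there exists a span A ← X → B of surjective functional bisimulations. -/

import Mathlib

/-- A quantaloid: a (small) locally ordered bicategory whose hom-posets are
complete lattices and whose composition preserves suprema in each variable. -/
structure Quantaloid where
  Obj : Type
  Hom : Obj → Obj → Type
  [lat : ∀ u v : Obj, CompleteLattice (Hom u v)]
  comp : ∀ {u v w : Obj}, Hom u v → Hom v w → Hom u w
  id : ∀ u : Obj, Hom u u
  comp_assoc : ∀ {u v w x : Obj} (f : Hom u v) (g : Hom v w) (h : Hom w x),
    comp (comp f g) h = comp f (comp g h)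
  id_comp : ∀ {u v : Obj} (f : Hom u v), comp (id u) f = f
  comp_id : ∀ {u v : Obj} (f : Hom u v), comp f (id v) = f
  comp_sSup_left : ∀ {u v w : Obj} (S : Set (Hom u v)) (g : Hom v w),
    comp (sSup S) g = sSup ((fun f => comp f g) '' S)
  comp_sSup_right : ∀ {u v w : Obj} (f : Hom u v) (S : Set (Hom v w)),
    comp f (sSup S) = sSup ((fun g => comp f g) '' S)

attribute [instance] Quantaloid.lat

/-- Transport of homs along equalities of objects. -/
def Quantaloid.cast (V : Quantaloid) {u u' v v' : V.Obj} (hu : u = u') (hv : v = v')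
    (f : V.Hom u v) : V.Hom u' v' := hu ▸ hv ▸ f

/-- A `V`-category. -/
structure VCat (V : Quantaloid) where
  Obj : Type
  pt : Obj → V.Obj
  hom : ∀ a b : Obj, V.Hom (pt a) (pt b)
  id_le : ∀ a, V.id (pt a) ≤ hom a a
  comp_le : ∀ a b c, V.comp (hom a b) (hom b c) ≤ hom a c

/-- A simulation from `A` to `B`. -/
def IsSimulation (V : Quantaloid) (A B : VCat V) (R : A.Obj → B.Obj → Prop) : Prop :=
  (∀ a b, R a b → A.pt a = B.pt b) ∧
  ∀ (a : A.Obj) (b : B.Obj), R a b → ∀ (a' : A.Obj) (h : A.pt a = B.pt b),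
    V.cast h rfl (A.hom a a') ≤
      sSup {x : V.Hom (B.pt b) (A.pt a') |
        ∃ (b' : B.Obj) (h' : A.pt a' = B.pt b'), R a' b' ∧ x = V.cast rfl h'.symm (B.hom b b')}

/-- A bisimulation from `A` to `B`. -/
def IsBisimulation (V : Quantaloid) (A B : VCat V) (R : A.Obj → B.Obj → Prop) : Prop :=
  IsSimulation V A B R ∧ IsSimulation V B A (fun b a => R a b)

/-- Bisimilarity of `V`-categories. -/
def Bisimilar (V : Quantaloid) (A B : VCat V) : Prop :=
  ∃ R, IsBisimulation V A B R ∧ (∀ a, ∃ b, R a b) ∧ (∀ b, ∃ a, R a b)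

/-- A `V`-functor. -/
structure VFunctor (V : Quantaloid) (A B : VCat V) where
  toFun : A.Obj → B.Obj
  pt_eq : ∀ a, B.pt (toFun a) = A.pt a
  map_le : ∀ a a',
    V.cast (pt_eq a).symm (pt_eq a').symm (A.hom a a') ≤ B.hom (toFun a) (toFun a')

/-- A surjective functional bisimulation (an "open" map). -/
def VFunctor.IsSFB {V : Quantaloid} {A B : VCat V} (f : VFunctor V A B) : Prop :=
  Function.Surjective f.toFun ∧
  ∀ (a : A.Obj) (b : B.Obj),
    B.hom (f.toFun a) b =
      sSup {x : V.Hom (B.pt (f.toFun a)) (B.pt b) |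
        ∃ (a' : A.Obj) (h : f.toFun a' = b),
          x = V.cast (f.pt_eq a).symm ((f.pt_eq a').symm.trans (congrArg B.pt h)) (A.hom a a')}


namespace Quantaloid

theorem cast_self (V : Quantaloid) {u v : V.Obj} (h1 : u = u) (h2 : v = v)
    (f : V.Hom u v) : V.cast h1 h2 f = f := rfl

theorem cast_cast (V : Quantaloid) {u u' u'' v v' v'' : V.Obj}
    (h1 : u = u') (h1' : u' = u'') (h2 : v = v') (h2' : v' = v'') (f : V.Hom u v) :
    V.cast h1' h2' (V.cast h1 h2 f) = V.cast (h1.trans h1') (h2.trans h2') f := by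
  subst h1; subst h1'; subst h2; subst h2'; rfl

theorem cast_mono (V : Quantaloid) {u u' v v' : V.Obj} (h1 : u = u') (h2 : v = v')
    {f g : V.Hom u v} (hfg : f ≤ g) : V.cast h1 h2 f ≤ V.cast h1 h2 g := by
  subst h1; subst h2; exact hfg

theorem cast_inf (V : Quantaloid) {u u' v v' : V.Obj} (h1 : u = u') (h2 : v = v')
    (f g : V.Hom u v) : V.cast h1 h2 (f ⊓ g) = V.cast h1 h2 f ⊓ V.cast h1 h2 g := by
  subst h1; subst h2; rfl

theorem cast_sSup (V : Quantaloid) {u u' v v' : V.Obj} (h1 : u = u') (h2 : v = v')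
    (S : Set (V.Hom u v)) :
    V.cast h1 h2 (sSup S) = sSup (V.cast h1 h2 '' S) := by
  subst h1; subst h2; rw [show V.cast (rfl : u = u) (rfl : v = v) = _root_.id from rfl, Set.image_id]; rfl

theorem cast_id (V : Quantaloid) {u u' : V.Obj} (h : u = u') :
    V.cast h h (V.id u) = V.id u' := by subst h; rfl

theorem cast_comp (V : Quantaloid) {u u' v v' w w' : V.Obj}
    (h1 : u = u') (h2 : v = v') (h3 : w = w') (f : V.Hom u v) (g : V.Hom v w) :
    V.comp (V.cast h1 h2 f) (V.cast h2 h3 g) = V.cast h1 h3 (V.comp f g) := by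
  subst h1; subst h2; subst h3; rfl

theorem comp_mono_left (V : Quantaloid) {u v w : V.Obj} {f f' : V.Hom u v}
    (g : V.Hom v w) (hf : f ≤ f') : V.comp f g ≤ V.comp f' g := by
  have h := V.comp_sSup_left {f, f'} g
  rw [Set.image_pair, sSup_pair, sSup_pair, sup_eq_right.mpr hf] at h
  exact h ▸ le_sup_left

theorem comp_mono_right (V : Quantaloid) {u v w : V.Obj} (f : V.Hom u v)
    {g g' : V.Hom v w} (hg : g ≤ g') : V.comp f g ≤ V.comp f g' := by
  have h := V.comp_sSup_right f {g, g'}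
  rw [Set.image_pair, sSup_pair, sSup_pair, sup_eq_right.mpr hg] at h
  exact h ▸ le_sup_left

theorem comp_mono (V : Quantaloid) {u v w : V.Obj} {f f' : V.Hom u v}
    {g g' : V.Hom v w} (hf : f ≤ f') (hg : g ≤ g') :
    V.comp f g ≤ V.comp f' g' :=
  (V.comp_mono_left g hf).trans (V.comp_mono_right f' hg)

end Quantaloid

open Quantaloid

/-- if `V` is locally distributive then `A` and `B` are bisimilar
iff there is a span `A ← X → B` of surjective functional bisimulations:
auxiliary construction. The vertex of the span built from a bisimulation. -/
def SpanCat (V : Quantaloid) (A B : VCat V) (R : A.Obj → B.Obj → Prop)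
    (hpt : ∀ a b, R a b → A.pt a = B.pt b) : VCat V where
  Obj := {ab : A.Obj × B.Obj // R ab.1 ab.2}
  pt x := A.pt x.1.1
  hom x y := A.hom x.1.1 y.1.1 ⊓
    V.cast (hpt _ _ x.2).symm (hpt _ _ y.2).symm (B.hom x.1.2 y.1.2)
  id_le x := by
    refine le_inf (A.id_le _) ?_
    have h2 := V.cast_mono (hpt _ _ x.2).symm (hpt _ _ x.2).symm (B.id_le x.1.2)
    rwa [Quantaloid.cast_id] at h2
  comp_le x y z := by
    refine le_inf ?_ ?_
    · exact (V.comp_mono inf_le_left inf_le_left).trans (A.comp_le _ _ _)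
    · refine (V.comp_mono inf_le_right inf_le_right).trans ?_
      rw [V.cast_comp]
      exact V.cast_mono _ _ (B.comp_le _ _ _)

def SpanP (V : Quantaloid) (A B : VCat V) (R : A.Obj → B.Obj → Prop)
    (hpt : ∀ a b, R a b → A.pt a = B.pt b) :
    VFunctor V (SpanCat V A B R hpt) A where
  toFun x := x.1.1
  pt_eq _ := rfl
  map_le x y := (V.cast_self _ _ _).le.trans inf_le_left

def SpanQ (V : Quantaloid) (A B : VCat V) (R : A.Obj → B.Obj → Prop)
    (hpt : ∀ a b, R a b → A.pt a = B.pt b) :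
    VFunctor V (SpanCat V A B R hpt) B where
  toFun x := x.1.2
  pt_eq x := (hpt _ _ x.2).symm
  map_le x y := by
    refine (V.cast_mono _ _ inf_le_right).trans ?_
    erw [V.cast_cast, V.cast_self]

set_option maxHeartbeats 1000000 in
theorem bisimilar_iff_span (V : Quantaloid)
    (hdist : ∀ (u v : V.Obj) (x : V.Hom u v) (S : Set (V.Hom u v)),
      x ⊓ sSup S = ⨆ y ∈ S, x ⊓ y)
    (A B : VCat V) :
    Bisimilar V A B ↔
      ∃ (X : VCat V) (p : VFunctor V X A) (q : VFunctor V X B),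
        p.IsSFB ∧ q.IsSFB := by
  constructor
  · rintro ⟨R, ⟨⟨hpt, hsAB⟩, ⟨hpt', hsBA⟩⟩, hsA, hsB⟩
    refine ⟨SpanCat V A B R hpt, SpanP V A B R hpt, SpanQ V A B R hpt,
      ⟨?_, ?_⟩, ⟨?_, ?_⟩⟩
    · -- p surjective
      intro a
      obtain ⟨b, hb⟩ := hsA a
      exact ⟨⟨(a, b), hb⟩, rfl⟩
    · -- p SFB sup condition
      intro x a'
      have h : A.pt x.1.1 = B.pt x.1.2 := hpt _ _ x.2
      refine le_antisymm ?_ (sSup_le ?_)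
      · have hzle : V.cast h rfl (A.hom x.1.1 a') ≤
            ⨆ y ∈ {y : V.Hom (B.pt x.1.2) (A.pt a') |
              ∃ (b' : B.Obj) (h' : A.pt a' = B.pt b'), R a' b' ∧
                y = V.cast rfl h'.symm (B.hom x.1.2 b')},
              V.cast h rfl (A.hom x.1.1 a') ⊓ y := by
          calc V.cast h rfl (A.hom x.1.1 a')
              = _ ⊓ _ := (inf_idem _).symm
            _ ≤ _ ⊓ _ := inf_le_inf_left _ (hsAB x.1.1 x.1.2 x.2 a' h)
            _ = _ := hdist _ _ _ _
        have key := V.cast_mono h.symm rfl hzle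
        rw [V.cast_cast, V.cast_self] at key
        refine key.trans ?_
        rw [← sSup_image, V.cast_sSup]
        refine sSup_le ?_
        rintro w ⟨w', ⟨y, hyT, rfl⟩, rfl⟩
        obtain ⟨b', h', hR, rfl⟩ := hyT
        refine le_sSup ⟨⟨(a', b'), hR⟩, rfl, ?_⟩
        erw [V.cast_self, V.cast_inf, V.cast_cast, V.cast_cast, V.cast_self]
        rfl
      · rintro y ⟨x', hh, rfl⟩
        subst hh
        erw [V.cast_self]
        exact inf_le_left
    · -- q surjective
      intro b
      obtain ⟨a, ha⟩ := hsB b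
      exact ⟨⟨(a, b), ha⟩, rfl⟩
    · -- q SFB sup condition
      intro x b'
      have g : B.pt x.1.2 = A.pt x.1.1 := hpt' _ _ x.2
      refine le_antisymm ?_ (sSup_le ?_)
      · have hzle : V.cast g rfl (B.hom x.1.2 b') ≤
            ⨆ y ∈ {y : V.Hom (A.pt x.1.1) (B.pt b') |
              ∃ (a' : A.Obj) (h' : B.pt b' = A.pt a'), R a' b' ∧
                y = V.cast rfl h'.symm (A.hom x.1.1 a')},
              V.cast g rfl (B.hom x.1.2 b') ⊓ y := by
          calc V.cast g rfl (B.hom x.1.2 b')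
              = _ ⊓ _ := (inf_idem _).symm
            _ ≤ _ ⊓ _ := inf_le_inf_left _ (hsBA x.1.2 x.1.1 x.2 b' g)
            _ = _ := hdist _ _ _ _
        have key := V.cast_mono g.symm rfl hzle
        rw [V.cast_cast, V.cast_self] at key
        refine key.trans ?_
        rw [← sSup_image, V.cast_sSup]
        refine sSup_le ?_
        rintro w ⟨w', ⟨y, hyT, rfl⟩, rfl⟩
        obtain ⟨a', h', hR, rfl⟩ := hyT
        refine le_sSup ⟨⟨(a', b'), hR⟩, rfl, ?_⟩
        rw [V.cast_inf, V.cast_cast, V.cast_self, V.cast_cast]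
        rw [show (SpanCat V A B R hpt).hom x ⟨(a', b'), hR⟩ =
          A.hom x.1.1 a' ⊓
            V.cast (hpt _ _ x.2).symm (hpt a' b' hR).symm (B.hom x.1.2 b') from rfl]
        erw [V.cast_inf, V.cast_cast, V.cast_self, inf_comm]
        rfl
      · rintro y ⟨x', hh, rfl⟩
        subst hh
        refine (V.cast_mono _ _ inf_le_right).trans ?_
        erw [V.cast_cast]
        exact (V.cast_self _ _ _).le
  · rintro ⟨X, p, q, ⟨psurj, pSFB⟩, ⟨qsurj, qSFB⟩⟩
    refine ⟨fun a b => ∃ x, p.toFun x = a ∧ q.toFun x = b,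
      ⟨⟨?_, ?_⟩, ⟨?_, ?_⟩⟩, ?_, ?_⟩
    · rintro a b ⟨x, rfl, rfl⟩
      exact (p.pt_eq x).trans (q.pt_eq x).symm
    · -- simulation A → B
      rintro a b ⟨x, rfl, rfl⟩ a' h
      rw [pSFB x a', V.cast_sSup]
      refine sSup_le ?_
      rintro w ⟨y, ⟨x', hh, rfl⟩, rfl⟩
      have h' : A.pt a' = B.pt (q.toFun x') := by
        rw [← hh]; exact (p.pt_eq x').trans (q.pt_eq x').symm
      refine le_trans ?_ (le_sSup ⟨q.toFun x', h', ⟨x', hh, rfl⟩, rfl⟩)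
      have hm := V.cast_mono rfl h'.symm (q.map_le x x')
      rw [V.cast_cast] at hm
      rw [V.cast_cast]
      exact hm
    · rintro b a ⟨x, rfl, rfl⟩
      exact (q.pt_eq x).trans (p.pt_eq x).symm
    · -- simulation B → A
      rintro b a ⟨x, rfl, rfl⟩ b' h
      rw [qSFB x b', V.cast_sSup]
      refine sSup_le ?_
      rintro w ⟨y, ⟨x', hh, rfl⟩, rfl⟩
      have h' : B.pt b' = A.pt (p.toFun x') := by
        rw [← hh]; exact (q.pt_eq x').trans (p.pt_eq x').symm
      refine le_trans ?_ (le_sSup ⟨p.toFun x', h', ⟨x', rfl, hh⟩, rfl⟩)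
      have hm := V.cast_mono rfl h'.symm (p.map_le x x')
      rw [V.cast_cast] at hm
      rw [V.cast_cast]
      exact hm
    · intro a
      obtain ⟨x, rfl⟩ := psurj a
      exact ⟨q.toFun x, x, rfl, rfl⟩
    · intro b
      obtain ⟨x, rfl⟩ := qsurj b
      exact ⟨p.toFun x, x, rfl, rfl⟩
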